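/- arXiv:1912.12078 — 5 statements merged into one kernel-verified Lean document; each statement's English description precedes it below -/
import Mathlib

section
/- Let D, R be real symmetric positive semidefinite q×q matrices with D·1 = R·1 = 0. If the second-smallest (by real part) eigenvalue of D + iR has nonpositive real part, then there exists a vector u not in the span of the all-ones vector with Du = 0 and Ru = σu for some real σ. -/
open Matrix Polynomial
open scoped ComplexOrder

/-- The complex matrix `D + iR` built from two real matrices. -/
noncomputable def cM {q : ℕ} (D R : Matrix (Fin q) (Fin q) ℝ) :
    Matrix (Fin q) (Fin q) ℂ :=
  D.map (fun a => (a : ℂ)) + Complex.I • (R.map (fun a => (a : ℂ)))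

/-- `Re λ₂(M) ≤ 0`: at least two eigenvalues (with multiplicity), ordered by real
part, have nonpositive real part. -/
noncomputable def reLam2Nonpos {q : ℕ} (M : Matrix (Fin q) (Fin q) ℂ) : Prop :=
  2 ≤ (M.charpoly.roots.filter (fun μ : ℂ => μ.re ≤ 0)).card

lemma mapPSD {q : ℕ} {A : Matrix (Fin q) (Fin q) ℝ} (hA : A.PosSemidef) :
    (A.map (fun a => (a : ℂ))).PosSemidef := by
  obtain ⟨B, hB⟩ : ∃ B : Matrix (Fin q) (Fin q) ℝ, A = Bᵀ * B := by
    open scoped MatrixOrder in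
    obtain ⟨B, hB⟩ := CStarAlgebra.nonneg_iff_eq_star_mul_self.mp hA.nonneg
    exact ⟨B, by simpa [star_eq_conjTranspose] using hB⟩
  have h : A.map (fun a => (a : ℂ)) = (B.map (fun a => (a : ℂ)))ᴴ * (B.map (fun a => (a : ℂ))) := by
    ext i j
    simp [hB, Matrix.mul_apply, Matrix.conjTranspose_apply, Matrix.map_apply]
  rw [h]; exact posSemidef_conjTranspose_mul_self _

lemma keyEig {q : ℕ} {D R : Matrix (Fin q) (Fin q) ℝ} (hD : D.PosSemidef) (hR : R.PosSemidef)
    {μ : ℂ} (hμ : μ.re ≤ 0) {v : Fin q → ℂ} (hv : v ≠ 0)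
    (hev : (cM D R).mulVec v = μ • v) :
    (D.map (fun a => (a : ℂ))).mulVec v = 0 ∧
    (R.map (fun a => (a : ℂ))).mulVec v = (μ.im : ℂ) • v ∧ μ.re = 0 := by
  set Dc := D.map (fun a => (a : ℂ)) with hDcdef
  set Rc := R.map (fun a => (a : ℂ)) with hRcdef
  have hDc := mapPSD hD
  have hRc := mapPSD hR
  set d := star v ⬝ᵥ (Dc.mulVec v) with hd
  set r := star v ⬝ᵥ (Rc.mulVec v) with hr
  set n := star v ⬝ᵥ v with hn
  have hdr : d + Complex.I * r = μ * n := by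
    have h1 := congrArg (fun w => star v ⬝ᵥ w) hev
    simpa [cM, Matrix.add_mulVec, Matrix.smul_mulVec, dotProduct_add,
      dotProduct_smul, smul_eq_mul, mul_comm] using h1
  have hd0 : 0 ≤ d := hDc.dotProduct_mulVec_nonneg v
  have hr0 : 0 ≤ r := hRc.dotProduct_mulVec_nonneg v
  have hn0 : 0 < n := Matrix.dotProduct_star_self_pos_iff.mpr hv
  rw [Complex.nonneg_iff] at hd0 hr0
  rw [Complex.pos_iff] at hn0
  have hre : d.re = μ.re * n.re := by
    have := congrArg Complex.re hdr
    simp [Complex.add_re, Complex.mul_re, ← hr0.2, ← hn0.2] at this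
    linarith
  have hmn : μ.re * n.re ≤ 0 := mul_nonpos_of_nonpos_of_nonneg hμ (le_of_lt hn0.1)
  have hdre : d.re = 0 := le_antisymm (by linarith) hd0.1
  have hμre : μ.re = 0 := by
    rcases mul_eq_zero.mp (hre.symm.trans hdre) with h | h
    · exact h
    · exact absurd h (ne_of_gt hn0.1)
  have hdz : d = 0 := Complex.ext hdre hd0.2.symm
  have hDv : Dc.mulVec v = 0 := (hDc.dotProduct_mulVec_zero_iff v).mp (hd ▸ hdz)
  have hIR : Complex.I • (Rc.mulVec v) = μ • v := by
    have : Dc.mulVec v + Complex.I • (Rc.mulVec v) = μ • v := by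
      simpa [cM, Matrix.add_mulVec, Matrix.smul_mulVec] using hev
    rwa [hDv, zero_add] at this
  have hRv : Rc.mulVec v = (μ.im : ℂ) • v := by
    have h2 : ((-Complex.I) * Complex.I) • (Rc.mulVec v) = ((-Complex.I) * μ) • v := by
      rw [mul_smul, hIR, mul_smul]
    have h3 : ((-Complex.I) * Complex.I) = 1 := by
      simp [Complex.I_mul_I]
    have h4 : ((-Complex.I) * μ) = (μ.im : ℂ) := by
      apply Complex.ext <;> simp [hμre]
    rw [h3, h4, one_smul] at h2
    exact h2
  exact ⟨hDv, hRv, hμre⟩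

lemma noJordan {q : ℕ} {D R : Matrix (Fin q) (Fin q) ℝ} (hD : D.PosSemidef) (hR : R.PosSemidef)
    {μ : ℂ} (hμ : μ.re ≤ 0) (w : Fin q → ℂ)
    (h : (cM D R - μ • 1).mulVec ((cM D R - μ • 1).mulVec w) = 0) :
    (cM D R - μ • 1).mulVec w = 0 := by
  set N := cM D R - μ • (1 : Matrix (Fin q) (Fin q) ℂ) with hN
  set v := N.mulVec w with hv
  by_contra hvne
  have hNv : ∀ u, N.mulVec u = (cM D R).mulVec u - μ • u := by
    intro u
    rw [hN, Matrix.sub_mulVec, Matrix.smul_mulVec, Matrix.one_mulVec]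
  have hev : (cM D R).mulVec v = μ • v := sub_eq_zero.mp ((hNv v).symm.trans h)
  obtain ⟨hDv, hRv, hμre⟩ := keyEig hD hR hμ hvne hev
  have hherm : (cM D R)ᴴ = D.map (fun a => (a : ℂ)) - Complex.I • R.map (fun a => (a : ℂ)) := by
    rw [cM, conjTranspose_add, conjTranspose_smul, (mapPSD hD).1.eq, (mapPSD hR).1.eq]
    simp [sub_eq_add_neg]
  have hNHv : Nᴴ.mulVec v = 0 := by
    rw [hN, conjTranspose_sub, conjTranspose_smul, conjTranspose_one, Matrix.sub_mulVec,
      Matrix.smul_mulVec, Matrix.one_mulVec, hherm, Matrix.sub_mulVec,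
      Matrix.smul_mulVec, hDv, hRv]
    have hconj : star μ = -Complex.I * (μ.im : ℂ) := by
      apply Complex.ext <;> simp [hμre]
    rw [hconj]
    match_scalars <;> ring
  have : star v ⬝ᵥ v = 0 := by
    have h1 : star v ⬝ᵥ v = (star v) ᵥ* N ⬝ᵥ w := Matrix.dotProduct_mulVec (star v) N w
    rw [h1, ← Matrix.conjTranspose_conjTranspose (M := N), ← Matrix.star_mulVec, hNHv]
    simp
  exact hvne (dotProduct_star_self_eq_zero.mp this)

lemma charpoly_shift {q : ℕ} (M : Matrix (Fin q) (Fin q) ℂ) (μ : ℂ) :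
    (M - μ • 1).charpoly = M.charpoly.comp (X + C μ) := by
  have hmat : charmatrix (M - μ • 1) = (charmatrix M).map (eval₂RingHom C (X + C μ)) := by
    ext i j
    by_cases h : i = j
    · subst h
      simp only [charmatrix_apply_eq, Matrix.map_apply, coe_eval₂RingHom, eval₂_sub, eval₂_X,
        eval₂_C, Matrix.sub_apply, Matrix.smul_apply, Matrix.one_apply_eq, smul_eq_mul, mul_one]
      push_cast
      ring_nf
      rw [C_sub]
      ring
    · simp [charmatrix_apply_ne _ _ _ h, Matrix.one_apply_ne h]
  have : (M - μ • 1).charpoly = ((eval₂RingHom C (X + C μ)).mapMatrix (charmatrix M)).det := by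
    rw [Matrix.charpoly, hmat]; rfl
  rw [this, ← RingHom.map_det]
  rfl

lemma kerBig {q : ℕ} (N : Matrix (Fin q) (Fin q) ℂ)
    (hstab : ∀ w, N.mulVec (N.mulVec w) = 0 → N.mulVec w = 0)
    (h2 : 2 ≤ N.charpoly.natTrailingDegree) :
    2 ≤ Module.finrank ℂ (LinearMap.ker (Matrix.toLin' N)) := by
  set f : Module.End ℂ (Fin q → ℂ) := Matrix.toLin' N with hf
  have hstab' : ∀ u, f (f u) = 0 → f u = 0 := by
    intro u hu
    have := hstab u (by simpa [hf, Matrix.toLin'_apply] using hu)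
    simpa [hf, Matrix.toLin'_apply] using this
  have hker : ∀ k (m : Fin q → ℂ), (f ^ k) m = 0 → f m = 0 := by
    intro k
    induction k with
    | zero => intro m hm; simp only [pow_zero, Module.End.one_apply] at hm; simp [hm]
    | succ k ih =>
      intro m hm
      rw [pow_succ] at hm
      exact hstab' m (ih (f m) hm)
  have hmax : f.maxGenEigenspace 0 = LinearMap.ker f := by
    ext m
    rw [Module.End.mem_maxGenEigenspace]
    simp only [zero_smul, sub_zero, LinearMap.mem_ker]
    exact ⟨fun ⟨k, hk⟩ => hker k m hk, fun h => ⟨1, by simpa using h⟩⟩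
  have hchar : f.charpoly = N.charpoly := by
    rw [← LinearMap.charpoly_toMatrix f (Pi.basisFun ℂ (Fin q)),
      LinearMap.toMatrix_eq_toMatrix', LinearMap.toMatrix'_toLin']
  rw [← hmax, LinearMap.finrank_maxGenEigenspace_zero_eq, hchar]
  exact h2


theorem stmt3 {q : ℕ} (D R : Matrix (Fin q) (Fin q) ℝ)
    (hD : D.PosSemidef) (hR : R.PosSemidef)
    (hD1 : D.mulVec (fun _ => 1) = 0) (hR1 : R.mulVec (fun _ => 1) = 0)
    (h2 : reLam2Nonpos (cM D R)) :
    ∃ (u : Fin q → ℂ) (σ : ℝ), u ≠ 0 ∧ (¬ ∃ c : ℂ, u = fun _ => c) ∧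
      (D.map (fun a => (a : ℂ))).mulVec u = 0 ∧
      (R.map (fun a => (a : ℂ))).mulVec u = (σ : ℂ) • u := by
  classical
  rw [reLam2Nonpos] at h2
  set Mc := cM D R with hMc
  set s := Mc.charpoly.roots.filter (fun μ : ℂ => μ.re ≤ 0) with hs
  -- q ≥ 2
  have hq : 2 ≤ q := by
    have h3 : s.card ≤ Mc.charpoly.roots.card := Multiset.card_le_card (Multiset.filter_le _ _)
    have h5 := Polynomial.card_roots' Mc.charpoly
    have hdeg : Mc.charpoly.natDegree = q := by simpa using Mc.charpoly_natDegree_eq_dim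
    omega
  have hones : (fun _ => (1 : ℂ) : Fin q → ℂ) ≠ 0 := by
    intro hcon
    have := congrFun hcon ⟨0, by omega⟩
    simp at this
  have hRones : (R.map (fun a => (a : ℂ))).mulVec (fun _ => (1 : ℂ)) = 0 := by
    funext i
    have h5 := congrFun hR1 i
    simp only [Matrix.mulVec, dotProduct, mul_one, Pi.zero_apply] at h5 ⊢
    simp only [Matrix.map_apply]
    rw [← Complex.ofReal_sum]
    exact_mod_cast congrArg (fun x : ℝ => (x : ℂ)) h5
  -- eigenvector from root
  have hroot : ∀ μ ∈ s, ∃ v : Fin q → ℂ, v ≠ 0 ∧ Mc.mulVec v = μ • v := by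
    intro μ hμ
    have hμr : μ ∈ Mc.charpoly.roots := Multiset.mem_of_mem_filter hμ
    have hev : Mc.charpoly.eval μ = 0 :=
      (Polynomial.isRoot_of_mem_roots hμr)
    have hdet : (Mc - μ • 1).det = 0 := by
      rw [Matrix.det_eq_sign_charpoly_coeff, charpoly_shift,
        Polynomial.coeff_zero_eq_eval_zero, Polynomial.eval_comp]
      simp [hev]
    obtain ⟨v, hv0, hv⟩ := (Matrix.exists_mulVec_eq_zero_iff).mpr hdet
    refine ⟨v, hv0, ?_⟩
    have : Mc.mulVec v - μ • v = 0 := by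
      rw [← hv, Matrix.sub_mulVec, Matrix.smul_mulVec, Matrix.one_mulVec]
    exact sub_eq_zero.mp this
  have hmem : ∀ μ ∈ s, μ.re ≤ 0 := fun μ hμ => (Multiset.mem_filter.mp hμ).2
  -- conclusion from a nonzero-imaginary eigenvalue
  have main : ∀ μ ∈ s, μ.im ≠ 0 →
      ∃ (u : Fin q → ℂ) (σ : ℝ), u ≠ 0 ∧ (¬ ∃ c : ℂ, u = fun _ => c) ∧
        (D.map (fun a => (a : ℂ))).mulVec u = 0 ∧
        (R.map (fun a => (a : ℂ))).mulVec u = (σ : ℂ) • u := by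
    intro μ hμ him
    obtain ⟨v, hv0, hv⟩ := hroot μ hμ
    obtain ⟨hDv, hRv, _⟩ := keyEig hD hR (hmem μ hμ) hv0 hv
    refine ⟨v, μ.im, hv0, ?_, hDv, hRv⟩
    rintro ⟨c, rfl⟩
    have hceq : (fun _ => c : Fin q → ℂ) = c • (fun _ => (1 : ℂ)) := by
      funext i; simp
    rw [hceq, Matrix.mulVec_smul, hRones, smul_zero] at hRv
    have := hRv.symm
    rw [smul_smul, smul_eq_zero] at this
    rcases this with h | h
    · exact him (by exact_mod_cast (mul_eq_zero.mp h).resolve_right (by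
        intro hc; exact hv0 (by rw [hceq, hc, zero_smul])))
    · exact hones h
  -- two cases
  obtain ⟨a, ha⟩ := Multiset.card_pos_iff_exists_mem.mp (by omega : 0 < s.card)
  obtain ⟨t, ht⟩ := Multiset.exists_cons_of_mem ha
  have htcard : 0 < t.card := by
    have := h2; rw [ht, Multiset.card_cons] at this; omega
  obtain ⟨b, hb⟩ := Multiset.card_pos_iff_exists_mem.mp htcard
  have hbs : b ∈ s := by rw [ht]; exact Multiset.mem_cons_of_mem hb
  by_cases hab : a = b
  · -- repeated root: multiplicity ≥ 2
    subst hab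
    have hcount : 2 ≤ Multiset.count a Mc.charpoly.roots := by
      have h6 : 2 ≤ Multiset.count a s := by
        rw [ht, Multiset.count_cons_self]
        have := Multiset.one_le_count_iff_mem.mpr hb
        omega
      calc 2 ≤ Multiset.count a s := h6
      _ ≤ Multiset.count a Mc.charpoly.roots :=
        Multiset.count_le_of_le _ (Multiset.filter_le _ _)
    have hmult : 2 ≤ (Mc - a • 1).charpoly.natTrailingDegree := by
      rw [charpoly_shift, ← Polynomial.rootMultiplicity_eq_natTrailingDegree]
      rwa [Polynomial.count_roots] at hcount
    have hstab := fun w => noJordan hD hR (hmem a ha) w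
    have hkr := kerBig (Mc - a • 1) hstab hmult
    -- find vector in kernel outside span of ones
    set c₀ : Fin q → ℂ := fun _ => 1 with hc₀
    have hnle : ¬ (LinearMap.ker (Matrix.toLin' (Mc - a • 1)) ≤ Submodule.span ℂ {c₀}) := by
      intro hle
      have h7 := Submodule.finrank_mono hle
      rw [finrank_span_singleton hones] at h7
      omega
    rw [SetLike.le_def] at hnle
    push_neg at hnle
    obtain ⟨u, hu, huns⟩ := hnle
    have hu0 : u ≠ 0 := by
      intro h; exact huns (h ▸ Submodule.zero_mem _)
    have hNu : (Mc - a • 1).mulVec u = 0 := by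
      rw [LinearMap.mem_ker, Matrix.toLin'_apply] at hu
      exact hu
    have hev : Mc.mulVec u = a • u := by
      apply sub_eq_zero.mp
      rw [← hNu, Matrix.sub_mulVec, Matrix.smul_mulVec, Matrix.one_mulVec]
    obtain ⟨hDu, hRu, _⟩ := keyEig hD hR (hmem a ha) hu0 hev
    refine ⟨u, a.im, hu0, ?_, hDu, hRu⟩
    rintro ⟨c, rfl⟩
    exact huns (Submodule.mem_span_singleton.mpr ⟨c, by funext i; simp [hc₀]⟩)
  · -- distinct roots
    obtain ⟨va, hva0, hva⟩ := hroot a ha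
    obtain ⟨_, _, hare⟩ := keyEig hD hR (hmem a ha) hva0 hva
    obtain ⟨vb, hvb0, hvb⟩ := hroot b hbs
    obtain ⟨_, _, hbre⟩ := keyEig hD hR (hmem b hbs) hvb0 hvb
    by_cases haim : a.im = 0
    · have hbim : b.im ≠ 0 := by
        intro hbim
        exact hab (Complex.ext (by rw [hare, hbre]) (by rw [haim, hbim]))
      exact main b hbs hbim
    · exact main a ha haim
end

section
/- Every connected finite graph admits a Laplacian matrix (with some choice of positive edge weights) such that no eigenvector of the Laplacian has a zero entry. -/
open Matrix Polynomial

noncomputable section StmtAux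

/-- The vector `e_a - e_b`. -/
def gvec {q : ℕ} (a b : Fin q) : Fin q → ℝ :=
  fun k => (if k = a then (1:ℝ) else 0) - (if k = b then 1 else 0)

lemma gvec_dot {q : ℕ} (a b : Fin q) (u : Fin q → ℝ) : gvec a b ⬝ᵥ u = u a - u b := by
  simp [gvec, dotProduct, sub_mul, Finset.sum_sub_distrib]

lemma gvec_apply_a {q : ℕ} {a b : Fin q} (hab : a ≠ b) : gvec a b a = 1 := by
  simp [gvec, hab]

lemma gvec_apply_b {q : ℕ} {a b : Fin q} (hab : a ≠ b) : gvec a b b = -1 := by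
  simp [gvec, Ne.symm hab]

lemma gvec_apply_other {q : ℕ} {a b k : Fin q} (hka : k ≠ a) (hkb : k ≠ b) : gvec a b k = 0 := by
  simp [gvec, hka, hkb]

lemma gvec_neg {q : ℕ} (a b : Fin q) : gvec b a = -gvec a b := by
  funext k; simp [gvec]

lemma vecMulVec_neg {q : ℕ} (x : Fin q → ℝ) : vecMulVec (-x) (-x) = vecMulVec x x := by
  ext i j; simp [vecMulVec_apply]

lemma vecMulVec_mulVec {q : ℕ} (x u : Fin q → ℝ) :
    (vecMulVec x x).mulVec u = (x ⬝ᵥ u) • x := by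
  funext k
  simp only [mulVec, vecMulVec_apply, dotProduct, Pi.smul_apply, smul_eq_mul, Finset.sum_mul]
  exact Finset.sum_congr rfl fun i _ => by ring

/-- dot product with a sum -/
lemma dot_sum {q n : ℕ} (v : Fin q → ℝ) (f : Fin n → Fin q → ℝ) :
    v ⬝ᵥ (∑ i, f i) = ∑ i, v ⬝ᵥ f i := by
  simp [dotProduct, Finset.mul_sum]
  rw [Finset.sum_comm]

/-- The invariant maintained while adding edges. -/
structure EInv {q : ℕ} (L : Matrix (Fin q) (Fin q) ℝ) (S : Finset (Fin q)) : Prop where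
  herm : L.IsHermitian
  psd : ∀ x, 0 ≤ x ⬝ᵥ L.mulVec x
  rows : ∀ k, k ∉ S → ∀ m, L k m = 0
  diag : ∀ k ∈ S, 0 < L k k
  ker : ∀ u, L.mulVec u = 0 → ∀ k ∈ S, ∀ l ∈ S, u k = u l
  eig0 : ∀ (σ : ℝ) (u : Fin q → ℝ), L.mulVec u = σ • u → σ ≠ 0 → ∀ k, k ∉ S → u k = 0
  eig1 : ∀ (σ : ℝ) (u : Fin q → ℝ), L.mulVec u = σ • u → σ ≠ 0 → u ≠ 0 → ∀ k ∈ S, u k ≠ 0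

lemma dot_self_nonneg {q : ℕ} (v : Fin q → ℝ) : 0 ≤ v ⬝ᵥ v :=
  Finset.sum_nonneg fun i _ => mul_self_nonneg _

lemma symm_dot {q : ℕ} {L : Matrix (Fin q) (Fin q) ℝ} (hH : L.IsHermitian)
    (u v : Fin q → ℝ) : u ⬝ᵥ L.mulVec v = L.mulVec u ⬝ᵥ v := by
  have ht : Lᵀ = L := by
    have h1 := hH.eq
    ext i j
    have h2 := congrFun (congrFun h1 j) i
    rw [Matrix.conjTranspose_apply] at h2
    simpa using h2.symm
  rw [Matrix.dotProduct_mulVec, ← Matrix.mulVec_transpose, ht]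

lemma psd_mulVec_eq_zero {q : ℕ} {L : Matrix (Fin q) (Fin q) ℝ} (hH : L.IsHermitian)
    (hpsd : ∀ x, 0 ≤ x ⬝ᵥ L.mulVec x) {x : Fin q → ℝ} (hx : x ⬝ᵥ L.mulVec x = 0) :
    L.mulVec x = 0 := by
  by_contra hy
  set y := L.mulVec x with hydef
  have hd : 0 < y ⬝ᵥ y := by
    rcases lt_or_eq_of_le (dot_self_nonneg y) with h | h
    · exact h
    · exact absurd (dotProduct_self_eq_zero.mp h.symm) hy
  set d := y ⬝ᵥ y with hdd
  set A := y ⬝ᵥ L.mulVec y with hAA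
  have hA : 0 ≤ A := hpsd y
  have key : ∀ t : ℝ, 0 ≤ 2 * t * d + t ^ 2 * A := by
    intro t
    have h0 := hpsd (x + t • y)
    have hexp : (x + t • y) ⬝ᵥ L.mulVec (x + t • y)
        = x ⬝ᵥ L.mulVec x + t * (y ⬝ᵥ L.mulVec x) + t * (x ⬝ᵥ L.mulVec y) + t ^ 2 * (y ⬝ᵥ L.mulVec y) := by
      rw [Matrix.mulVec_add, Matrix.mulVec_smul]
      simp [dotProduct_add, add_dotProduct, dotProduct_smul,
        smul_dotProduct, smul_eq_mul]
      ring
    have hxy : x ⬝ᵥ L.mulVec y = y ⬝ᵥ y := by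
      rw [symm_dot hH, ← hydef, dotProduct_comm]
    have hyx : y ⬝ᵥ L.mulVec x = y ⬝ᵥ y := rfl
    rw [hexp, hx, hxy, hyx] at h0
    calc (0:ℝ) ≤ _ := h0
    _ = 2 * t * d + t ^ 2 * A := by rw [hdd, hAA]; ring
  have hkey := key (-(d / (A + 1)))
  have hA1 : (0:ℝ) < A + 1 := by linarith
  have h1 : d / (A + 1) * (A + 1) = d := div_mul_cancel₀ _ (ne_of_gt hA1)
  nlinarith [sq_nonneg (d / (A + 1)), mul_pos hd (div_pos hd hA1)]

end StmtAux

noncomputable section StmtAux2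

variable {q : ℕ}

/-- Eigenbasis as plain vectors. -/
def Bv {L : Matrix (Fin q) (Fin q) ℝ} (hH : L.IsHermitian) (i : Fin q) : Fin q → ℝ :=
  (WithLp.equiv 2 _) (hH.eigenvectorBasis i)

lemma Bv_eigen {L : Matrix (Fin q) (Fin q) ℝ} (hH : L.IsHermitian) (i : Fin q) :
    L.mulVec (Bv hH i) = hH.eigenvalues i • Bv hH i :=
  hH.mulVec_eigenvectorBasis i

lemma Bv_dot {L : Matrix (Fin q) (Fin q) ℝ} (hH : L.IsHermitian) (i j : Fin q) :
    Bv hH i ⬝ᵥ Bv hH j = if i = j then 1 else 0 := by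
  have h := hH.eigenvectorBasis.orthonormal
  rw [orthonormal_iff_ite] at h
  have := h i j
  rw [PiLp.inner_apply] at this
  simpa [Bv, dotProduct, RCLike.inner_apply, mul_comm] using this

lemma Bv_expand {L : Matrix (Fin q) (Fin q) ℝ} (hH : L.IsHermitian) (x : Fin q → ℝ) :
    x = ∑ i, (Bv hH i ⬝ᵥ x) • Bv hH i := by
  have h2 : ∀ i, hH.eigenvectorBasis.repr ((WithLp.equiv 2 _).symm x) i = Bv hH i ⬝ᵥ x := by
    intro i
    rw [OrthonormalBasis.repr_apply_apply, PiLp.inner_apply]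
    simp [Bv, dotProduct, RCLike.inner_apply]
    exact Finset.sum_congr rfl fun _ _ => mul_comm _ _
  have h := hH.eigenvectorBasis.sum_repr ((WithLp.equiv 2 _).symm x)
  simp_rw [h2] at h
  funext k
  have h3 := congrArg (fun v => v.ofLp k) h
  simpa [Bv, Finset.sum_apply] using h3.symm

lemma Bv_ne_zero {L : Matrix (Fin q) (Fin q) ℝ} (hH : L.IsHermitian) (i : Fin q) :
    Bv hH i ≠ 0 := by
  intro h0
  have := Bv_dot hH i i
  rw [h0] at this
  simp [zero_dotProduct] at this

set_option maxHeartbeats 2000000 in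
theorem inv_step {L : Matrix (Fin q) (Fin q) ℝ} {S : Finset (Fin q)} {a b : Fin q}
    (hab : a ≠ b) (haS : a ∈ S ∨ S = ∅) (h : EInv L S) :
    ∃ D : Set ℝ, D.Finite ∧ ∀ δ : ℝ, 0 < δ → δ ∉ D →
      EInv (L + δ • vecMulVec (gvec a b) (gvec a b)) (S ∪ {a, b}) := by
  classical
  set g : Fin q → ℝ := gvec a b with hgdef
  have hH := h.herm
  set B : Fin q → Fin q → ℝ := Bv hH with hBdef
  set μ : Fin q → ℝ := hH.eigenvalues with hμdef
  have hLB : ∀ i, L.mulVec (B i) = μ i • B i := fun i => Bv_eigen hH i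
  have hBB : ∀ i j, B i ⬝ᵥ B j = if i = j then 1 else 0 := fun i j => Bv_dot hH i j
  have hexp : ∀ x : Fin q → ℝ, x = ∑ i, (B i ⬝ᵥ x) • B i := fun x => Bv_expand hH x
  have hBne : ∀ i, B i ≠ 0 := fun i => Bv_ne_zero hH i
  set gc : Fin q → ℝ := fun i => B i ⬝ᵥ g with hgcdef
  set Φ : ℝ → ℝ := fun σ => ∑ i, gc i ^ 2 / (σ - μ i) with hΦdef
  set Q : Fin q → Polynomial ℝ := fun k =>
    ∑ i, Polynomial.C (gc i * B i k) * ∏ j ∈ Finset.univ.erase i, (Polynomial.X - Polynomial.C (μ j))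
    with hQdef
  set D : Set ℝ := {δ | ∃ σ : ℝ, ((∃ i, μ i = σ) ∨ ∃ k ∈ S, (Q k).IsRoot σ) ∧ δ * Φ σ = 1}
    with hDdef
  -- simplicity of nonzero eigenvalues
  have hsimp : S.Nonempty → ∀ i j, μ i ≠ 0 → i ≠ j → μ j ≠ μ i := by
    rintro ⟨k₀, hk₀⟩ i j hμi hij heq
    set w' : Fin q → ℝ := B i k₀ • B j - B j k₀ • B i with hw'
    have hw'eig : L.mulVec w' = μ i • w' := by
      rw [hw', Matrix.mulVec_sub, Matrix.mulVec_smul, Matrix.mulVec_smul, hLB, hLB, heq]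
      funext m
      simp [smul_eq_mul]
      ring
    have hw'k₀ : w' k₀ = 0 := by simp [hw']; ring
    by_cases hz : w' = 0
    · -- B i k₀ • B j = B j k₀ • B i ; dot with B j
      have he : B i k₀ • B j = B j k₀ • B i := by
        have := sub_eq_zero.mp (hz ▸ rfl : w' = 0)
        rw [hw'] at hz
        exact sub_eq_zero.mp hz
      have e1 := congrArg (fun v => B j ⬝ᵥ v) he
      simp only [dotProduct_smul, smul_eq_mul] at e1
      rw [hBB j j, hBB j i, if_pos rfl, if_neg (Ne.symm hij)] at e1
      simp at e1
      -- e1 : B i k₀ = 0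
      exact h.eig1 (μ i) (B i) (hLB i) hμi (hBne i) k₀ hk₀ e1
    · exact h.eig1 (μ i) w' hw'eig hμi hz k₀ hk₀ hw'k₀
  -- g is not in the kernel when a ∈ S
  have hLentry : ∀ i j, L i j = L j i := by
    intro i j
    have h2 := congrFun (congrFun hH.eq j) i
    rw [Matrix.conjTranspose_apply] at h2
    simpa using h2
  have hgnotker : a ∈ S → L.mulVec g ≠ 0 := by
    intro haS' hLg
    by_cases hbS : b ∈ S
    · have := h.ker g hLg a haS' b hbS
      rw [hgdef, gvec_apply_a hab, gvec_apply_b hab] at this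
      linarith
    · by_cases hS1 : ∃ k ∈ S, k ≠ a
      · obtain ⟨k, hkS, hka⟩ := hS1
        have := h.ker g hLg a haS' k hkS
        rw [hgdef, gvec_apply_a hab, gvec_apply_other hka
          (fun hkb => hbS (by rw [← hkb]; exact hkS))] at this
        linarith
      · push_neg at hS1
        -- S = {a}
        have hLab : L a b = 0 := by rw [hLentry]; exact h.rows b hbS a
        have hval := congrFun hLg a
        have : L.mulVec g a = L a a := by
          simp only [mulVec, dotProduct]
          rw [Finset.sum_eq_add_of_mem a b (Finset.mem_univ _) (Finset.mem_univ _) hab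
            (by intro c _ hc; rcases hc with ⟨hca, hcb⟩
                rw [hgdef, gvec_apply_other hca hcb, mul_zero])]
          rw [hgdef, gvec_apply_a hab, gvec_apply_b hab, hLab]
          ring
        rw [this] at hval
        exact absurd hval (ne_of_gt (h.diag a haS'))
  -- existence of a nonzero-eigenvalue component of g
  have hexpg : g = ∑ i, gc i • B i := by
    simpa only [hgcdef] using hexp g
  have histar : a ∈ S → ∃ i, μ i ≠ 0 ∧ gc i ≠ 0 := by
    intro haS'
    by_contra hno
    push_neg at hno
    apply hgnotker haS'
    have hmv : L.mulVec g = ∑ i, gc i • L.mulVec (B i) := by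
      conv_lhs => rw [hexpg]
      rw [← Matrix.mulVecLin_apply, map_sum]
      simp [Matrix.mulVecLin_apply]
    rw [hmv]
    apply Finset.sum_eq_zero
    intro i _
    by_cases hμi : μ i = 0
    · rw [hLB i, hμi, zero_smul, smul_zero]
    · rw [hno i hμi, zero_smul]
  have hQne : a ∈ S → ∀ k ∈ S, Q k ≠ 0 := by
    intro haS' k hk
    obtain ⟨i0, hμ0, hgc0⟩ := histar haS'
    have hSne : S.Nonempty := ⟨a, haS'⟩
    have heval : (Q k).eval (μ i0)
        = (gc i0 * B i0 k) * ∏ j ∈ Finset.univ.erase i0, (μ i0 - μ j) := by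
      rw [hQdef]
      simp only [Polynomial.eval_finset_sum, Polynomial.eval_mul, Polynomial.eval_C,
        Polynomial.eval_prod, Polynomial.eval_sub, Polynomial.eval_X]
      rw [Finset.sum_eq_single i0]
      · intro i _ hii
        apply mul_eq_zero_of_right
        exact Finset.prod_eq_zero (Finset.mem_erase.mpr ⟨Ne.symm hii, Finset.mem_univ _⟩)
          (sub_self _)
      · intro hni; exact absurd (Finset.mem_univ i0) hni
    have hBik : B i0 k ≠ 0 := h.eig1 (μ i0) (B i0) (hLB i0) hμ0 (hBne i0) k hk
    have hprod : (∏ j ∈ Finset.univ.erase i0, (μ i0 - μ j)) ≠ 0 := by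
      apply Finset.prod_ne_zero_iff.mpr
      intro j hj
      have hji : j ≠ i0 := (Finset.mem_erase.mp hj).1
      exact sub_ne_zero.mpr (Ne.symm (hsimp hSne i0 j hμ0 (Ne.symm hji)))
    intro hQ0
    rw [hQ0, Polynomial.eval_zero] at heval
    exact (mul_ne_zero (mul_ne_zero hgc0 hBik) hprod) heval.symm
  -- D is finite
  have hfib : ∀ σ : ℝ, {δ : ℝ | δ * Φ σ = 1}.Finite := by
    intro σ
    have hss : {δ : ℝ | δ * Φ σ = 1}.Subsingleton := by
      intro x hx y hy
      by_cases hΦ0 : Φ σ = 0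
      · exfalso
        have hx2 : x * Φ σ = 1 := hx
        rw [hΦ0, mul_zero] at hx2
        norm_num at hx2
      · have hx' : x * Φ σ = 1 := hx
        have hy' : y * Φ σ = 1 := hy
        exact mul_right_cancel₀ hΦ0 (hx'.trans hy'.symm)
    exact hss.finite
  have hDfin : D.Finite := by
    have hroots : ∀ k ∈ S, {σ : ℝ | (Q k).IsRoot σ}.Finite := by
      intro k hk
      have haS' : a ∈ S := by
        rcases haS with h' | h'
        · exact h'
        · rw [h'] at hk; exact absurd hk (Finset.notMem_empty k)
      exact Polynomial.finite_setOf_isRoot (hQne haS' k hk)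
    have hA : (Set.range μ ∪ ⋃ k ∈ (S : Set (Fin q)), {σ : ℝ | (Q k).IsRoot σ}).Finite :=
      Set.Finite.union (Set.finite_range μ)
        (Set.Finite.biUnion S.finite_toSet (fun k hk => hroots k hk))
    apply Set.Finite.subset (hA.biUnion (fun σ _ => hfib σ))
    intro δ hδ
    obtain ⟨σ, hσ, hrel⟩ := hδ
    have hσA : σ ∈ Set.range μ ∪ ⋃ k ∈ (S : Set (Fin q)), {σ : ℝ | (Q k).IsRoot σ} := by
      rcases hσ with ⟨i, hi⟩ | ⟨k, hk, hr⟩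
      · exact Set.mem_union_left _ ⟨i, hi⟩
      · exact Set.mem_union_right _ (Set.mem_biUnion (Finset.mem_coe.mpr hk) hr)
    exact Set.mem_biUnion hσA hrel
  refine ⟨D, hDfin, ?_⟩
  intro δ hδ hδD
  have hL'mv : ∀ u, (L + δ • vecMulVec g g).mulVec u
      = L.mulVec u + (δ * (g ⬝ᵥ u)) • g := by
    intro u
    rw [Matrix.add_mulVec, Matrix.smul_mulVec, vecMulVec_mulVec, smul_smul]
  have hmem : ∀ k, k ∈ S ∪ {a, b} ↔ (k ∈ S ∨ k = a ∨ k = b) := by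
    intro k
    simp only [Finset.mem_union, Finset.mem_insert, Finset.mem_singleton]
  have hrowg : ∀ k, k ≠ a → k ≠ b → g k = 0 := fun k hka hkb => by
    rw [hgdef]; exact gvec_apply_other hka hkb
  have hga : g a = 1 := by rw [hgdef]; exact gvec_apply_a hab
  have hgb : g b = -1 := by rw [hgdef]; exact gvec_apply_b hab
  have hL'dot : ∀ x, x ⬝ᵥ (L + δ • vecMulVec g g).mulVec x
      = x ⬝ᵥ L.mulVec x + δ * (g ⬝ᵥ x) ^ 2 := by
    intro x
    rw [hL'mv, dotProduct_add, dotProduct_smul, dotProduct_comm x g]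
    simp only [smul_eq_mul]
    ring
  refine ⟨?_, ?_, ?_, ?_, ?_, ?_, ?_⟩
  · -- herm
    apply hH.add
    show (δ • vecMulVec g g)ᴴ = δ • vecMulVec g g
    ext i j
    simp only [Matrix.conjTranspose_apply, Matrix.smul_apply, vecMulVec_apply,
      smul_eq_mul, star_trivial]
    ring
  · -- psd
    intro x
    rw [hL'dot]
    exact add_nonneg (h.psd x) (mul_nonneg hδ.le (sq_nonneg _))
  · -- rows
    intro k hk m
    rw [hmem] at hk
    push_neg at hk
    obtain ⟨hkS, hka, hkb⟩ := hk
    simp [Matrix.add_apply, Matrix.smul_apply, vecMulVec_apply, h.rows k hkS m,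
      hrowg k hka hkb]
  · -- diag
    intro k hk
    rw [hmem] at hk
    have hd : (L + δ • vecMulVec g g) k k = L k k + δ * (g k * g k) := by
      simp [Matrix.add_apply, Matrix.smul_apply, vecMulVec_apply]
    rw [hd]
    by_cases hkS : k ∈ S
    · have := h.diag k hkS
      nlinarith [sq_nonneg (g k)]
    · have hLkk : L k k = 0 := h.rows k hkS k
      have hgk : g k * g k = 1 := by
        rcases hk with h' | h' | h'
        · exact absurd h' hkS
        · rw [h', hga]; norm_num
        · rw [h', hgb]; norm_num
      rw [hLkk, hgk]
      simpa using hδ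
  · -- ker
    intro u hu
    have h0 : u ⬝ᵥ (L + δ • vecMulVec g g).mulVec u = 0 := by rw [hu]; simp
    rw [hL'dot] at h0
    have h1 : 0 ≤ u ⬝ᵥ L.mulVec u := h.psd u
    have h2 : 0 ≤ δ * (g ⬝ᵥ u) ^ 2 := mul_nonneg hδ.le (sq_nonneg _)
    have h3 : u ⬝ᵥ L.mulVec u = 0 := by linarith
    have h4 : g ⬝ᵥ u = 0 := by
      have : δ * (g ⬝ᵥ u) ^ 2 = 0 := by linarith
      have := (mul_eq_zero.mp this).resolve_left (ne_of_gt hδ)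
      exact pow_eq_zero_iff (by norm_num) |>.mp this
    have hLu : L.mulVec u = 0 := psd_mulVec_eq_zero hH h.psd h3
    have hab' : u a = u b := by
      rw [hgdef, gvec_dot] at h4
      linarith
    have hconst : ∀ k ∈ S ∪ {a, b}, u k = u a := by
      intro k hk
      rw [hmem] at hk
      rcases hk with hkS | hka | hkb
      · rcases haS with haS' | hSe
        · exact h.ker u hLu k hkS a haS'
        · rw [hSe] at hkS; exact absurd hkS (Finset.notMem_empty k)
      · rw [hka]
      · rw [hkb]; exact hab'.symm
    intro k hk l hl
    rw [hconst k hk, hconst l hl]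
  · -- eig0
    intro σ u hu hσ k hk
    rw [hmem] at hk
    push_neg at hk
    obtain ⟨hkS, hka, hkb⟩ := hk
    have hrowk : L.mulVec u k = 0 := by
      simp only [mulVec, dotProduct]
      exact Finset.sum_eq_zero fun m _ => by rw [h.rows k hkS m, zero_mul]
    have hval := congrFun (hL'mv u) k
    rw [hu] at hval
    simp only [Pi.add_apply, Pi.smul_apply, smul_eq_mul, hrowk, hrowg k hka hkb,
      mul_zero, add_zero, zero_add] at hval
    exact (mul_eq_zero.mp hval).resolve_left hσ
  · -- eig1
    intro σ u hu hσ hune k hk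
    have hval := hL'mv u
    rw [hu] at hval
    set c := δ * (g ⬝ᵥ u) with hc
    have heq : L.mulVec u = σ • u - c • g := by
      rw [eq_sub_iff_add_eq]; exact hval.symm
    by_cases hcz : c = 0
    · rw [hcz, zero_smul, sub_zero] at heq
      rw [hmem] at hk
      by_cases hbS : b ∈ S
      · have haS' : a ∈ S := by
          rcases haS with h' | h'
          · exact h'
          · rw [h'] at hbS; exact absurd hbS (Finset.notMem_empty b)
        have hkS : k ∈ S := by
          rcases hk with h' | h' | h'
          · exact h'
          · rw [h']; exact haS'
          · rw [h']; exact hbS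
        exact h.eig1 σ u heq hσ hune k hkS
      · exfalso
        have hub : u b = 0 := h.eig0 σ u heq hσ b hbS
        rcases haS with haS' | hSe
        · have hua : u a ≠ 0 := h.eig1 σ u heq hσ hune a haS'
          apply hua
          have hgu0 : g ⬝ᵥ u = 0 := by
            have := hcz
            rw [hc] at this
            exact (mul_eq_zero.mp this).resolve_left (ne_of_gt hδ)
          rw [hgdef, gvec_dot, hub, sub_zero] at hgu0
          exact hgu0
        · apply hune
          funext m
          exact h.eig0 σ u heq hσ m (by rw [hSe]; exact Finset.notMem_empty m)
    · -- c ≠ 0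
      set cu : Fin q → ℝ := fun i => B i ⬝ᵥ u with hcudef
      have hcoef : ∀ i, cu i * (σ - μ i) = c * gc i := by
        intro i
        have h1 : B i ⬝ᵥ L.mulVec u = μ i * cu i := by
          rw [symm_dot hH, hLB i, smul_dotProduct]
          simp [smul_eq_mul, hcudef]
        have h2 := congrArg (fun v => B i ⬝ᵥ v) heq
        simp only [dotProduct_sub, dotProduct_smul, smul_eq_mul] at h2
        rw [h1] at h2
        have h3 : μ i * cu i = σ * cu i - c * gc i := by
          simpa [hcudef, hgcdef] using h2
        linear_combination -h3
      have hgc00 : ∀ i, μ i = σ → gc i = 0 := by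
        intro i hi
        have := hcoef i
        rw [hi, sub_self, mul_zero] at this
        exact (mul_eq_zero.mp this.symm).resolve_left hcz
      have hgu : g ⬝ᵥ u = c * Φ σ := by
        have h1 : g ⬝ᵥ u = ∑ i, cu i * gc i := by
          conv_lhs => rw [hexp u]
          rw [dot_sum]
          apply Finset.sum_congr rfl
          intro i _
          rw [dotProduct_smul, dotProduct_comm g (B i)]
          simp [smul_eq_mul, hcudef, hgcdef]
        rw [h1, hΦdef, Finset.mul_sum]
        apply Finset.sum_congr rfl
        intro i _
        by_cases hi : μ i = σ
        · rw [hgc00 i hi]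
          simp
        · have hne : σ - μ i ≠ 0 := sub_ne_zero.mpr (Ne.symm hi)
          have hcu : cu i = c * gc i / (σ - μ i) := (eq_div_iff hne).mpr (hcoef i)
          rw [hcu]
          field_simp
      have hΦδ : δ * Φ σ = 1 := by
        have h1 : c = δ * (c * Φ σ) := by rw [← hgu]
        have h2 : c * (δ * Φ σ) = c * 1 := by
          rw [mul_one]; linear_combination -h1
        exact mul_left_cancel₀ hcz h2
      have hnotev : ∀ i, μ i ≠ σ := by
        intro i hi
        exact hδD ⟨σ, Or.inl ⟨i, hi⟩, hΦδ⟩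
      rw [hmem] at hk
      by_cases hkS : k ∈ S
      · have hcu : ∀ i, cu i = c * gc i / (σ - μ i) := by
          intro i
          have hne : σ - μ i ≠ 0 := sub_ne_zero.mpr (Ne.symm (hnotev i))
          exact (eq_div_iff hne).mpr (hcoef i)
        have huk : u k = c * ∑ i, gc i * B i k / (σ - μ i) := by
          have h1 := congrFun (hexp u) k
          rw [Finset.sum_apply] at h1
          rw [show u k = ∑ i, ((B i ⬝ᵥ u) • B i) k from h1, Finset.mul_sum]
          apply Finset.sum_congr rfl
          intro i _
          rw [Pi.smul_apply, smul_eq_mul]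
          have : (B i ⬝ᵥ u) = cu i := rfl
          rw [this, hcu i]
          ring
        intro huk0
        have hsum0 : ∑ i, gc i * B i k / (σ - μ i) = 0 := by
          rw [huk] at huk0
          exact (mul_eq_zero.mp huk0).resolve_left hcz
        have hQr : (Q k).IsRoot σ := by
          show (Q k).eval σ = 0
          rw [hQdef]
          simp only [Polynomial.eval_finset_sum, Polynomial.eval_mul, Polynomial.eval_C,
            Polynomial.eval_prod, Polynomial.eval_sub, Polynomial.eval_X]
          have hterm : ∀ i : Fin q, (gc i * B i k) * ∏ j ∈ Finset.univ.erase i, (σ - μ j)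
              = (gc i * B i k / (σ - μ i)) * ∏ j, (σ - μ j) := by
            intro i
            rw [← Finset.mul_prod_erase Finset.univ _ (Finset.mem_univ i)]
            have hne : σ - μ i ≠ 0 := sub_ne_zero.mpr (Ne.symm (hnotev i))
            field_simp
          rw [Finset.sum_congr rfl (fun i _ => hterm i), ← Finset.sum_mul, hsum0, zero_mul]
        exact hδD ⟨σ, Or.inr ⟨k, hkS, hQr⟩, hΦδ⟩
      · have hkab : k = a ∨ k = b := by tauto
        have hrowk : L.mulVec u k = 0 := by
          simp only [mulVec, dotProduct]
          exact Finset.sum_eq_zero fun m _ => by rw [h.rows k hkS m, zero_mul]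
        have hgk : g k ≠ 0 := by
          rcases hkab with h' | h'
          · rw [h', hga]; norm_num
          · rw [h', hgb]; norm_num
        have h2 := congrFun heq k
        rw [hrowk] at h2
        simp only [Pi.sub_apply, Pi.smul_apply, smul_eq_mul] at h2
        intro huk0
        rw [huk0, mul_zero] at h2
        have : c * g k = 0 := by linarith
        rcases mul_eq_zero.mp this with h' | h'
        · exact hcz h'
        · exact hgk h'


end StmtAux2

noncomputable section Build

variable {q p : ℕ}

/-- Partial Laplacian over a set of processed edges. -/
def Lmat (EA EB : Fin p → Fin q) (w : Fin p → ℝ) (P : Finset (Fin p)) :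
    Matrix (Fin q) (Fin q) ℝ :=
  ∑ j ∈ P, w j • vecMulVec (gvec (EA j) (EB j)) (gvec (EA j) (EB j))

/-- Vertices touched by processed edges. -/
def SP (EA EB : Fin p → Fin q) (P : Finset (Fin p)) : Finset (Fin q) :=
  P.biUnion (fun j => {EA j, EB j})

lemma einv_zero : EInv (0 : Matrix (Fin q) (Fin q) ℝ) (∅ : Finset (Fin q)) := by
  refine ⟨?_, ?_, ?_, ?_, ?_, ?_, ?_⟩
  · exact isHermitian_zero
  · intro x; rw [Matrix.zero_mulVec, dotProduct_zero]
  · intros; rfl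
  · intro k hk; exact absurd hk (Finset.notMem_empty k)
  · intro u _ k hk; exact absurd hk (Finset.notMem_empty k)
  · intro σ u hu hσ k _
    rw [Matrix.zero_mulVec] at hu
    have := congrFun hu k
    simp only [Pi.zero_apply, Pi.smul_apply, smul_eq_mul] at this
    exact ((mul_eq_zero.mp this.symm).resolve_left hσ)
  · intro σ u hu hσ hune k hk; exact absurd hk (Finset.notMem_empty k)

lemma build (G : Matrix (Fin q) (Fin p) ℝ) (EA EB : Fin p → Fin q)
    (hne : ∀ j, EA j ≠ EB j)
    (hcol : ∀ j i, G i j = gvec (EA j) (EB j) i)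
    (hconn : ∀ v : Fin q → ℝ, Gᵀ.mulVec v = 0 → ∃ c : ℝ, v = fun _ => c) :
    ∀ n : ℕ, n ≤ p → ∃ P : Finset (Fin p), P.card = n ∧ ∃ w : Fin p → ℝ,
      (∀ j ∈ P, 0 < w j) ∧ EInv (Lmat EA EB w P) (SP EA EB P) := by
  intro n
  induction n with
  | zero =>
    intro _
    have h1 : Lmat EA EB 1 (∅ : Finset (Fin p)) = 0 := Finset.sum_empty
    have h2 : SP EA EB (∅ : Finset (Fin p)) = ∅ := Finset.biUnion_empty
    exact ⟨∅, rfl, 1, by simp, h1 ▸ h2 ▸ einv_zero⟩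
  | succ n ih =>
    intro hnp
    obtain ⟨P, hPcard, w, hwpos, hInv⟩ := ih (le_of_lt (Nat.lt_of_succ_le hnp))
    have hPne : P ≠ Finset.univ := by
      intro hPu
      rw [hPu, Finset.card_univ, Fintype.card_fin] at hPcard
      omega
    have hexj : ∃ j, j ∉ P := by
      by_contra hno
      push_neg at hno
      exact hPne (Finset.eq_univ_iff_forall.mpr hno)
    have key : ∃ j, j ∉ P ∧
        (EA j ∈ SP EA EB P ∨ EB j ∈ SP EA EB P ∨ SP EA EB P = ∅) := by
      by_cases hP0 : P = ∅
      · obtain ⟨j, hj⟩ := hexj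
        refine ⟨j, hj, Or.inr (Or.inr ?_)⟩
        rw [hP0]
        exact Finset.biUnion_empty
      · by_contra hno
        push_neg at hno
        set v : Fin q → ℝ := fun i => if i ∈ SP EA EB P then 1 else 0 with hv
        have hGv : Gᵀ.mulVec v = 0 := by
          funext j
          have h1 : Gᵀ.mulVec v j = gvec (EA j) (EB j) ⬝ᵥ v := by
            simp only [Matrix.mulVec, Matrix.transpose_apply, dotProduct]
            exact Finset.sum_congr rfl fun i _ => by rw [hcol j i]
          rw [h1, gvec_dot]
          by_cases hj : j ∈ P
          · have hA : EA j ∈ SP EA EB P := Finset.mem_biUnion.mpr ⟨j, hj, by simp⟩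
            have hB : EB j ∈ SP EA EB P := Finset.mem_biUnion.mpr ⟨j, hj, by simp⟩
            simp [hv, hA, hB]
          · obtain ⟨hA, hB, _⟩ := hno j hj
            simp [hv, hA, hB]
        obtain ⟨cst, hcst⟩ := hconn v hGv
        obtain ⟨j₀, hj₀⟩ := Finset.nonempty_iff_ne_empty.mpr hP0
        have hA0 : EA j₀ ∈ SP EA EB P := Finset.mem_biUnion.mpr ⟨j₀, hj₀, by simp⟩
        have hc1 : cst = 1 := by
          have h2 := congrFun hcst (EA j₀)
          simp only [hv, if_pos hA0] at h2
          exact h2.symm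
        have hall : ∀ i : Fin q, i ∈ SP EA EB P := by
          intro i
          by_contra hi
          have h2 := congrFun hcst i
          rw [hc1] at h2
          simp only [hv, if_neg hi] at h2
          norm_num at h2
        obtain ⟨j1, hj1⟩ := hexj
        exact (hno j1 hj1).1 (hall (EA j1))
    obtain ⟨j, hjP, hcase⟩ := key
    have hInv' : ∃ D : Set ℝ, D.Finite ∧ ∀ δ : ℝ, 0 < δ → δ ∉ D →
        EInv (Lmat EA EB w P + δ • vecMulVec (gvec (EA j) (EB j)) (gvec (EA j) (EB j)))
          (SP EA EB P ∪ {EA j, EB j}) := by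
      rcases hcase with hA | hB | h0
      · exact inv_step (hne j) (Or.inl hA) hInv
      · obtain ⟨D, hD, hstep⟩ := inv_step (Ne.symm (hne j)) (Or.inl hB) hInv
        refine ⟨D, hD, fun δ hδ hδD => ?_⟩
        have h1 := hstep δ hδ hδD
        rw [gvec_neg (EA j) (EB j), vecMulVec_neg] at h1
        rw [Finset.pair_comm (EB j) (EA j)] at h1
        exact h1
      · exact inv_step (hne j) (Or.inr h0) hInv
    obtain ⟨D, hD, hstep⟩ := hInv'
    have hδex : (Set.Ioi (0:ℝ) \ D).Nonempty :=
      Set.Infinite.nonempty (Set.Infinite.diff (Set.Ioi_infinite 0) hD)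
    obtain ⟨δ, hδmem⟩ := hδex
    have hδ : 0 < δ := hδmem.1
    have hδD : δ ∉ D := hδmem.2
    refine ⟨insert j P, ?_, Function.update w j δ, ?_, ?_⟩
    · rw [Finset.card_insert_of_notMem hjP, hPcard]
    · intro i hi
      rcases Finset.mem_insert.mp hi with h' | h'
      · rw [h', Function.update_self]; exact hδ
      · rw [Function.update_of_ne (by rintro rfl; exact hjP h')]
        exact hwpos i h'
    · have hLm : Lmat EA EB (Function.update w j δ) (insert j P)
          = Lmat EA EB w P + δ • vecMulVec (gvec (EA j) (EB j)) (gvec (EA j) (EB j)) := by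
        rw [Lmat, Finset.sum_insert hjP, Function.update_self, add_comm]
        congr 1
        apply Finset.sum_congr rfl
        intro i hi
        rw [Function.update_of_ne (by rintro rfl; exact hjP hi)]
      have hSP : SP EA EB (insert j P) = SP EA EB P ∪ {EA j, EB j} := by
        rw [SP, Finset.biUnion_insert]
        exact Finset.union_comm _ _
      rw [hLm, hSP]
      exact hstep δ hδ hδD

end Build


/-- `G` is the incidence matrix of a graph: every column is `e_k - e_ℓ`
for some pair of distinct vertices `k, ℓ`. -/
def IsIncidence {q p : ℕ} (G : Matrix (Fin q) (Fin p) ℝ) : Prop :=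
  ∀ j : Fin p, ∃ k ℓ : Fin q, k ≠ ℓ ∧
    ∀ i : Fin q, G i j = (if i = k then 1 else 0) - (if i = ℓ then 1 else 0)

/-- Every connected finite graph admits a Laplacian (for some choice of positive
edge weights) none of whose eigenvectors has a zero entry. -/
theorem stmt6 {q p : ℕ} (G : Matrix (Fin q) (Fin p) ℝ) (hG : IsIncidence G)
    (hconn : ∀ v : Fin q → ℝ, Gᵀ.mulVec v = 0 → ∃ c : ℝ, v = fun _ => c) :
    ∃ w : Fin p → ℝ, (∀ j, 0 < w j) ∧
      ∀ (u : Fin q → ℝ) (σ : ℝ), u ≠ 0 →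
        (G * diagonal w * Gᵀ).mulVec u = σ • u → ∀ i, u i ≠ 0 := by
  classical
  choose EA EB hne hcol using hG
  have hcol' : ∀ (j : Fin p) (i : Fin q), G i j = gvec (EA j) (EB j) i := hcol
  obtain ⟨P, hPcard, w, hwpos, hInv⟩ := build G EA EB hne hcol' hconn p le_rfl
  have hPuniv : P = Finset.univ :=
    Finset.eq_univ_of_card P (by rw [hPcard, Fintype.card_fin])
  rw [hPuniv] at hwpos hInv
  refine ⟨w, fun j => hwpos j (Finset.mem_univ j), ?_⟩
  intro u σ hune hueq i
  have hmatrix : G * diagonal w * Gᵀ = Lmat EA EB w Finset.univ := by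
    ext i' m
    rw [Matrix.mul_apply]
    have hterm : ∀ j, (G * diagonal w) i' j * Gᵀ j m
        = w j * (gvec (EA j) (EB j) i' * gvec (EA j) (EB j) m) := by
      intro j
      rw [Matrix.mul_diagonal, Matrix.transpose_apply, hcol' j i', hcol' j m]
      ring
    rw [Finset.sum_congr rfl (fun j _ => hterm j), Lmat, Matrix.sum_apply]
    apply Finset.sum_congr rfl
    intro j _
    simp [Matrix.smul_apply, vecMulVec_apply]
  rw [hmatrix] at hueq
  have hsub : ∀ m : Fin q, m ∉ SP EA EB (Finset.univ : Finset (Fin p)) →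
      ∀ k : Fin q, k = m := by
    intro m hm k
    set v : Fin q → ℝ := fun i' => if i' = m then 1 else 0 with hv
    have hGv : Gᵀ.mulVec v = 0 := by
      funext j
      have h1 : Gᵀ.mulVec v j = gvec (EA j) (EB j) ⬝ᵥ v := by
        simp only [Matrix.mulVec, Matrix.transpose_apply, dotProduct]
        exact Finset.sum_congr rfl fun i' _ => by rw [hcol' j i']
      rw [h1, gvec_dot]
      have hA : EA j ≠ m := fun h' =>
        hm (Finset.mem_biUnion.mpr ⟨j, Finset.mem_univ j, by simp [← h']⟩)
      have hB : EB j ≠ m := fun h' =>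
        hm (Finset.mem_biUnion.mpr ⟨j, Finset.mem_univ j, by simp [← h']⟩)
      simp [hv, hA, hB]
    obtain ⟨cst, hcst⟩ := hconn v hGv
    have h1 : cst = 1 := by
      have h2 := congrFun hcst m
      simp only [hv, if_pos rfl] at h2
      exact h2.symm
    by_contra hkm
    have h2 := congrFun hcst k
    rw [h1] at h2
    simp only [hv, if_neg hkm] at h2
    norm_num at h2
  obtain ⟨m0, hm0⟩ := Function.ne_iff.mp hune
  have hm0' : u m0 ≠ 0 := hm0
  by_cases hiS : i ∈ SP EA EB (Finset.univ : Finset (Fin p))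
  · by_cases hσ : σ = 0
    · rw [hσ, zero_smul] at hueq
      by_cases hm0S : m0 ∈ SP EA EB (Finset.univ : Finset (Fin p))
      · have heqm := hInv.ker u hueq i hiS m0 hm0S
        rw [heqm]
        exact hm0'
      · rw [hsub m0 hm0S i]
        exact hm0'
    · exact hInv.eig1 σ u hueq hσ hune i hiS
  · rw [show i = m0 from (hsub i hiS m0).symm ▸ rfl]
    exact hm0'
end

section
/- Let L ∈ ℝ^{q×q} be a Laplacian of a connected graph (symmetric PSD, L·1 = 0, with one-dimensional kernel) and let b = e_k − e_ℓ for distinct indices k, ℓ. If no eigenvector of L has a zero entry, then for all sufficiently small w > 0, no eigenvector of L + w·b·bᵀ has a zero entry. -/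
open Matrix Filter Topology

/-- Rank-one perturbation of a connected-graph Laplacian along a new edge
`b = e_k - e_ℓ`: if no eigenvector of `L` has a zero entry, then for all
sufficiently small weights `w > 0` no eigenvector of `L + w·b·bᵀ` has a
zero entry. -/
theorem stmt7 {q : ℕ} (L : Matrix (Fin q) (Fin q) ℝ)
    (hL : L.PosSemidef) (hLsym : Lᵀ = L)
    (hL1 : L.mulVec (fun _ => 1) = 0)
    (hker : ∀ v : Fin q → ℝ, L.mulVec v = 0 → ∃ c : ℝ, v = fun _ => c)
    (k ℓ : Fin q) (hkl : k ≠ ℓ)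
    (hnz : ∀ (u : Fin q → ℝ) (σ : ℝ), u ≠ 0 → L.mulVec u = σ • u → ∀ i, u i ≠ 0) :
    ∃ w₀ : ℝ, 0 < w₀ ∧ ∀ w : ℝ, 0 < w → w < w₀ →
      ∀ (u : Fin q → ℝ) (σ : ℝ), u ≠ 0 →
        (L + w • vecMulVec
            (fun i => (if i = k then 1 else 0) - (if i = ℓ then 1 else 0))
            (fun i => (if i = k then 1 else 0) - (if i = ℓ then 1 else 0))).mulVec u
          = σ • u →
        ∀ i, u i ≠ 0 := by
  classical
  set b : Fin q → ℝ := fun i => (if i = k then 1 else 0) - (if i = ℓ then 1 else 0) with hbdef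
  set B : Matrix (Fin q) (Fin q) ℝ := vecMulVec b b with hBdef
  by_contra hcon
  push_neg at hcon
  have h := fun n : ℕ => hcon (1/(n+1)) (by positivity)
  choose w hw1 hw2 u σ hu0 heq i hi using h
  -- normalize the eigenvectors
  set v : ℕ → Fin q → ℝ := fun n => ‖u n‖⁻¹ • u n with hvdef
  have hun : ∀ n, ‖u n‖ ≠ 0 := fun n => norm_ne_zero_iff.mpr (hu0 n)
  have hv1 : ∀ n, ‖v n‖ = 1 := by
    intro n
    simp [hvdef, norm_smul, abs_of_nonneg (inv_nonneg.mpr (norm_nonneg (u n))),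
      inv_mul_cancel₀ (hun n)]
  have hveq : ∀ n, (L + w n • B).mulVec (v n) = σ n • v n := by
    intro n
    simp only [hvdef, Matrix.mulVec_smul, heq n, smul_smul, mul_comm]
  have hvi : ∀ n, v n (i n) = 0 := by
    intro n; simp [hvdef, hi n]
  -- bound on |b|
  have hbabs : ∀ j, |b j| ≤ 1 := by
    intro j
    show |(if j = k then (1:ℝ) else 0) - (if j = ℓ then 1 else 0)| ≤ 1
    split_ifs <;> norm_num
  -- bound on w
  have hwle : ∀ n, w n ≤ 1 := by
    intro n
    have := hw2 n
    have h1 : (1:ℝ)/(n+1) ≤ 1 := by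
      rw [div_le_one (by positivity)]; linarith [Nat.cast_nonneg (α := ℝ) n]
    linarith
  -- bound on σ
  set C : ℝ := (∑ a, ∑ c, |L a c|) + q with hCdef
  have hσC : ∀ n, |σ n| ≤ C := by
    intro n
    -- find a coordinate where the sup norm is attained
    have hne : (Finset.univ : Finset (Fin q)).Nonempty := ⟨k, Finset.mem_univ k⟩
    obtain ⟨j, -, hj⟩ := Finset.exists_mem_eq_sup Finset.univ hne (fun a => ‖v n a‖₊)
    have hjn : ‖v n j‖ = 1 := by
      have h0 : ‖v n‖₊ = ‖v n j‖₊ := by rw [Pi.nnnorm_def, hj]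
      have h2 := congrArg (fun x : NNReal => (x : ℝ)) h0
      simp only [coe_nnnorm] at h2
      rw [← h2]; exact hv1 n
    have hvle : ∀ a, |v n a| ≤ 1 := by
      intro a
      calc |v n a| = ‖v n a‖ := rfl
        _ ≤ ‖v n‖ := norm_le_pi_norm (v n) a
        _ = 1 := hv1 n
    have hrow := congrFun (hveq n) j
    have hσj : σ n * v n j = ∑ c, (L j c + w n * (b j * b c)) * v n c := by
      have : (L + w n • B).mulVec (v n) j = ∑ c, (L j c + w n * (b j * b c)) * v n c := by
        simp [Matrix.mulVec, dotProduct, hBdef, vecMulVec_apply, Matrix.add_apply,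
          Matrix.smul_apply, smul_eq_mul]
      rw [this] at hrow
      simpa [Pi.smul_apply, smul_eq_mul] using hrow.symm
    have habs : |σ n| = |σ n * v n j| := by
      rw [abs_mul]
      have : |v n j| = 1 := by rw [← hjn]; rfl
      rw [this, mul_one]
    rw [habs, hσj]
    calc |∑ c, (L j c + w n * (b j * b c)) * v n c|
        ≤ ∑ c, |(L j c + w n * (b j * b c)) * v n c| := Finset.abs_sum_le_sum_abs _ _
      _ ≤ ∑ c, (|L j c| + 1) := by
          apply Finset.sum_le_sum
          intro c _
          rw [abs_mul]
          have h1 : |L j c + w n * (b j * b c)| ≤ |L j c| + 1 := by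
            calc |L j c + w n * (b j * b c)| ≤ |L j c| + |w n * (b j * b c)| := abs_add_le _ _
              _ ≤ |L j c| + 1 := by
                  gcongr
                  rw [abs_mul, abs_mul]
                  have hbj := hbabs j; have hbc := hbabs c
                  have hw : |w n| ≤ 1 := by rw [abs_of_pos (hw1 n)]; exact hwle n
                  have habj := abs_nonneg (b j); have habc := abs_nonneg (b c)
                  exact mul_le_one₀ hw (by positivity) (mul_le_one₀ hbj (abs_nonneg _) hbc)
          calc |L j c + w n * (b j * b c)| * |v n c| ≤ (|L j c| + 1) * 1 := by
                apply mul_le_mul h1 (hvle c) (abs_nonneg _) (by positivity)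
            _ = |L j c| + 1 := mul_one _
      _ = (∑ c, |L j c|) + q := by rw [Finset.sum_add_distrib]; simp
      _ ≤ C := by
          rw [hCdef]
          have hs : (∑ c, |L j c|) ≤ ∑ a, ∑ c, |L a c| :=
            Finset.single_le_sum (f := fun a => ∑ c, |L a c|)
              (fun a _ => Finset.sum_nonneg fun c _ => abs_nonneg _) (Finset.mem_univ j)
          linarith
  -- pigeonhole on the zero coordinate
  obtain ⟨i₀, hfib⟩ := Finite.exists_infinite_fiber i
  have hinf : (i ⁻¹' {i₀}).Infinite := Set.infinite_coe_iff.mp hfib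
  set e := hinf.natEmbedding with hedef
  set φ : ℕ → ℕ := fun n => (e n : ℕ) with hφdef
  have hφinj : Function.Injective φ := fun a b hab => e.injective (Subtype.ext hab)
  have hφtop : Tendsto φ atTop atTop := by
    rw [← Nat.cofinite_eq_atTop]
    exact hφinj.tendsto_cofinite
  have hφi : ∀ n, i (φ n) = i₀ := fun n => (e n).2
  -- compactness
  have hK : IsCompact ((Metric.sphere (0 : Fin q → ℝ) 1) ×ˢ Set.Icc (-C) C) :=
    (isCompact_sphere 0 1).prod isCompact_Icc
  have hmem : ∀ n, ((v (φ n), σ (φ n)) : (Fin q → ℝ) × ℝ) ∈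
      (Metric.sphere (0 : Fin q → ℝ) 1) ×ˢ Set.Icc (-C) C := by
    intro n
    constructor
    · simp [Metric.mem_sphere, dist_eq_norm, hv1]
    · exact abs_le.mp (hσC (φ n))
  obtain ⟨⟨uL, sL⟩, hmemK, ψ, hψ, htend⟩ := hK.tendsto_subseq hmem
  have huLtend : Tendsto (fun n => v (φ (ψ n))) atTop (𝓝 uL) :=
    (continuous_fst.tendsto _).comp htend
  have hsLtend : Tendsto (fun n => σ (φ (ψ n))) atTop (𝓝 sL) :=
    (continuous_snd.tendsto _).comp htend
  -- w along the subsequence tends to 0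
  have hwtend : Tendsto (fun n => w (φ (ψ n))) atTop (𝓝 0) := by
    have hsub : Tendsto (fun n => φ (ψ n)) atTop atTop := hφtop.comp hψ.tendsto_atTop
    have h0 : Tendsto (fun m : ℕ => (1:ℝ)/(m+1)) atTop (𝓝 0) := by
      exact tendsto_one_div_add_atTop_nhds_zero_nat
    have h1 : Tendsto (fun n => (1:ℝ)/(φ (ψ n)+1)) atTop (𝓝 0) := h0.comp hsub
    refine squeeze_zero (fun n => (hw1 _).le) (fun n => (hw2 _).le) h1
  -- take the limit of the eigen-equation
  have hLcont : Continuous (fun x : Fin q → ℝ => L.mulVec x) := by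
    have : Continuous (fun x : Fin q → ℝ => L.mulVecLin x) :=
      L.mulVecLin.continuous_of_finiteDimensional
    simpa [Matrix.mulVecLin_apply] using this
  have hBcont : Continuous (fun x : Fin q → ℝ => B.mulVec x) := by
    have : Continuous (fun x : Fin q → ℝ => B.mulVecLin x) :=
      B.mulVecLin.continuous_of_finiteDimensional
    simpa [Matrix.mulVecLin_apply] using this
  have hlhs : Tendsto (fun n => (L + w (φ (ψ n)) • B).mulVec (v (φ (ψ n)))) atTop
      (𝓝 (L.mulVec uL)) := by
    have heq2 : ∀ n, (L + w (φ (ψ n)) • B).mulVec (v (φ (ψ n))) =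
        L.mulVec (v (φ (ψ n))) + w (φ (ψ n)) • B.mulVec (v (φ (ψ n))) := by
      intro n
      rw [Matrix.add_mulVec, Matrix.smul_mulVec]
    simp only [heq2]
    have h1 : Tendsto (fun n => L.mulVec (v (φ (ψ n)))) atTop (𝓝 (L.mulVec uL)) :=
      (hLcont.tendsto _).comp huLtend
    have h2 : Tendsto (fun n => w (φ (ψ n)) • B.mulVec (v (φ (ψ n)))) atTop
        (𝓝 ((0:ℝ) • B.mulVec uL)) :=
      hwtend.smul ((hBcont.tendsto _).comp huLtend)
    simpa using h1.add h2
  have hrhs : Tendsto (fun n => σ (φ (ψ n)) • v (φ (ψ n))) atTop (𝓝 (sL • uL)) :=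
    hsLtend.smul huLtend
  have hlim : L.mulVec uL = sL • uL := by
    refine tendsto_nhds_unique ?_ hrhs
    have : (fun n => (L + w (φ (ψ n)) • B).mulVec (v (φ (ψ n)))) =
        fun n => σ (φ (ψ n)) • v (φ (ψ n)) := funext fun n => hveq (φ (ψ n))
    rwa [this] at hlhs
  -- uL ≠ 0
  have huLnorm : ‖uL‖ = 1 := by
    have := hmemK.1
    simpa [Metric.mem_sphere, dist_eq_norm] using this
  have huL0 : uL ≠ 0 := by
    intro h; rw [h] at huLnorm; simp at huLnorm
  -- uL i₀ = 0
  have huLi : uL i₀ = 0 := by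
    have hev : Tendsto (fun n => v (φ (ψ n)) i₀) atTop (𝓝 (uL i₀)) :=
      ((continuous_apply i₀).tendsto _).comp huLtend
    have hzero : (fun n => v (φ (ψ n)) i₀) = fun _ => (0:ℝ) := by
      funext n
      have := hvi (φ (ψ n))
      rwa [hφi (ψ n)] at this
    rw [hzero] at hev
    exact tendsto_nhds_unique hev tendsto_const_nhds
  exact hnz uL sL huL0 hlim i₀ huLi
end

section
/- Let L be a real symmetric q×q matrix with distinct eigenvalues σ₁,…,σ_q and orthonormal eigenvectors u₁,…,u_q, and let E be symmetric with ‖E‖ ≤ δ. If u is a unit eigenvector of L + E with (L+E)u = (σ₁ + h)u where |h| ≤ δ and 2δ < c₁ := min_{i≠j}|σᵢ − σⱼ|, then the component of u orthogonal to u₁ has norm at most 4δ/c₁. -/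
open Matrix

/-- Euclidean dot product on `Fin q → ℝ`. -/
def rdot {q : ℕ} (u v : Fin q → ℝ) : ℝ := ∑ t, u t * v t

/-- Euclidean norm on `Fin q → ℝ`. -/
noncomputable def rnorm {q : ℕ} (u : Fin q → ℝ) : ℝ := Real.sqrt (∑ t, u t ^ 2)

lemma rdot_eq_dot {q : ℕ} (u v : Fin q → ℝ) : rdot u v = u ⬝ᵥ v := rfl

lemma rnorm_sq {q : ℕ} (v : Fin q → ℝ) : rnorm v ^ 2 = ∑ t, v t ^ 2 :=
  Real.sq_sqrt (by positivity)

lemma rnorm_nonneg {q : ℕ} (v : Fin q → ℝ) : 0 ≤ rnorm v := Real.sqrt_nonneg _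

lemma parseval {q : ℕ} (U : Fin q → (Fin q → ℝ))
    (hon : ∀ i j, rdot (U i) (U j) = if i = j then (1 : ℝ) else 0)
    (v : Fin q → ℝ) : ∑ i, (rdot (U i) v) ^ 2 = ∑ t, v t ^ 2 := by
  set M : Matrix (Fin q) (Fin q) ℝ := Matrix.of U with hM
  have h1 : M * Mᵀ = 1 := by
    ext i j
    simpa [Matrix.mul_apply, rdot, Matrix.one_apply, hM] using hon i j
  have h2 : Mᵀ * M = 1 := mul_eq_one_comm.mp h1
  have hMv : ∀ i, (M.mulVec v) i = rdot (U i) v := by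
    intro i; simp [Matrix.mulVec, dotProduct, rdot, hM]
  have hback : Mᵀ.mulVec (M.mulVec v) = v := by
    rw [Matrix.mulVec_mulVec, h2, Matrix.one_mulVec]
  calc ∑ i, (rdot (U i) v) ^ 2 = (M.mulVec v) ⬝ᵥ (M.mulVec v) := by
        simp [dotProduct, hMv, sq]
    _ = v ⬝ᵥ v := by
        rw [Matrix.dotProduct_mulVec, ← Matrix.mulVec_transpose, hback]
    _ = ∑ t, v t ^ 2 := by simp [dotProduct, sq]

/-- Eigenvector perturbation bound: if `L` is symmetric with pairwise-distinct
eigenvalues `σ i` (gap at least `c₁`) and orthonormal eigenvectors `U i`, `E` is a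
symmetric perturbation of operator norm at most `δ` with `2δ < c₁`, and `u` is a
unit eigenvector of `L + E` with eigenvalue `σ i₁ + h`, `|h| ≤ δ`, then the
component of `u` orthogonal to `U i₁` has norm at most `4δ/c₁`. -/
theorem stmt8 {q : ℕ} (L E : Matrix (Fin q) (Fin q) ℝ)
    (hLsym : Lᵀ = L) (hEsym : Eᵀ = E)
    (σ : Fin q → ℝ) (U : Fin q → (Fin q → ℝ))
    (heig : ∀ i, L.mulVec (U i) = σ i • U i)
    (hon : ∀ i j, rdot (U i) (U j) = if i = j then (1 : ℝ) else 0)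
    (δ c₁ : ℝ) (hδ : 0 ≤ δ)
    (hE : ∀ v : Fin q → ℝ, rnorm (E.mulVec v) ≤ δ * rnorm v)
    (hgap : ∀ i j, i ≠ j → c₁ ≤ |σ i - σ j|) (hsep : 2 * δ < c₁)
    (i₁ : Fin q) (u : Fin q → ℝ) (h : ℝ) (hu : rnorm u = 1)
    (hueig : (L + E).mulVec u = (σ i₁ + h) • u) (hh : |h| ≤ δ) :
    rnorm (fun t => u t - rdot (U i₁) u * U i₁ t) ≤ 4 * δ / c₁ := by
  have hc₁ : 0 < c₁ := lt_of_le_of_lt (by linarith) hsep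
  set c : Fin q → ℝ := fun i => rdot (U i) u with hc
  set a : Fin q → ℝ := fun i => rdot (U i) (E.mulVec u) with ha
  have key : ∀ i, (σ i₁ + h - σ i) * c i = a i := by
    intro i
    have h1 : rdot (U i) ((L + E).mulVec u) = (σ i₁ + h) * c i := by
      rw [hueig]
      simp [rdot, hc, Finset.mul_sum, mul_comm, mul_left_comm]
    have h2 : rdot (U i) (L.mulVec u) = σ i * c i := by
      rw [rdot_eq_dot, Matrix.dotProduct_mulVec, ← Matrix.mulVec_transpose, hLsym, heig]
      simp [rdot, hc, dotProduct, Finset.mul_sum, mul_comm, mul_left_comm]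
    have h3 : rdot (U i) ((L + E).mulVec u)
        = rdot (U i) (L.mulVec u) + rdot (U i) (E.mulVec u) := by
      simp [rdot, Matrix.add_mulVec, Finset.sum_add_distrib, mul_add]
    have h4 := h3.symm.trans h1
    rw [h2] at h4
    simp only [ha, hc] at h4 ⊢
    linarith
  have haE : ∑ i, a i ^ 2 ≤ δ ^ 2 := by
    have hp := parseval U hon (E.mulVec u)
    have hEu : rnorm (E.mulVec u) ≤ δ := by simpa [hu] using hE u
    have heq : ∑ i, a i ^ 2 = rnorm (E.mulVec u) ^ 2 := by
      rw [rnorm_sq]; exact hp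
    rw [heq]
    exact pow_le_pow_left₀ (rnorm_nonneg _) hEu 2
  have hci : ∀ i, i ≠ i₁ → (c₁ / 2) ^ 2 * c i ^ 2 ≤ a i ^ 2 := by
    intro i hi
    have hg := hgap i₁ i (Ne.symm hi)
    have habs : c₁ / 2 ≤ |σ i₁ + h - σ i| := by
      have h5 := abs_sub_abs_le_abs_sub (σ i₁ - σ i) (-h)
      have heq : σ i₁ - σ i - (-h) = σ i₁ + h - σ i := by ring
      rw [heq, abs_neg] at h5
      linarith
    have hk := key i
    calc (c₁ / 2) ^ 2 * c i ^ 2 ≤ |σ i₁ + h - σ i| ^ 2 * c i ^ 2 := by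
          apply mul_le_mul_of_nonneg_right _ (sq_nonneg _)
          exact pow_le_pow_left₀ (by linarith) habs 2
      _ = ((σ i₁ + h - σ i) * c i) ^ 2 := by rw [mul_pow, sq_abs]
      _ = a i ^ 2 := by rw [hk]
  set w : Fin q → ℝ := fun t => u t - c i₁ * U i₁ t with hw
  have hwc : ∀ i, rdot (U i) w = if i = i₁ then 0 else c i := by
    intro i
    have h6 : rdot (U i) w = rdot (U i) u - c i₁ * rdot (U i) (U i₁) := by
      simp [rdot, hw, mul_sub, Finset.sum_sub_distrib, Finset.mul_sum,
        mul_comm, mul_left_comm]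
    rw [h6, hon i i₁]
    by_cases hii : i = i₁ <;> simp [hii, hc]
  have hwsum : ∑ t, w t ^ 2 = ∑ i ∈ Finset.univ.erase i₁, c i ^ 2 := by
    rw [← parseval U hon w]
    have h7 : ∑ i, (if i = i₁ then (0:ℝ) else c i ^ 2)
        = ∑ i ∈ Finset.univ.erase i₁, c i ^ 2 := by
      rw [← Finset.add_sum_erase _ _ (Finset.mem_univ i₁)]
      simp only [eq_self_iff_true, if_true, zero_add]
      exact Finset.sum_congr rfl (fun i hi => by simp [Finset.ne_of_mem_erase hi])
    rw [← h7]
    refine Finset.sum_congr rfl (fun i _ => ?_)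
    rw [hwc i]
    by_cases hii : i = i₁ <;> simp [hii]
  have hsum2 : ∑ i ∈ Finset.univ.erase i₁, c i ^ 2 ≤ (2 * δ / c₁) ^ 2 := by
    have h8 : ∀ i ∈ Finset.univ.erase i₁, c i ^ 2 ≤ (2 / c₁) ^ 2 * a i ^ 2 := by
      intro i hi
      have hne := Finset.ne_of_mem_erase hi
      have hk := hci i hne
      have hpos : (0:ℝ) < (c₁ / 2) ^ 2 := by positivity
      have : c i ^ 2 = (2 / c₁) ^ 2 * ((c₁ / 2) ^ 2 * c i ^ 2) := by
        field_simp
      rw [this]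
      apply mul_le_mul_of_nonneg_left hk (by positivity)
    calc ∑ i ∈ Finset.univ.erase i₁, c i ^ 2
        ≤ ∑ i ∈ Finset.univ.erase i₁, (2 / c₁) ^ 2 * a i ^ 2 :=
          Finset.sum_le_sum h8
      _ ≤ ∑ i, (2 / c₁) ^ 2 * a i ^ 2 :=
          Finset.sum_le_sum_of_subset_of_nonneg (Finset.erase_subset _ _)
            (fun i _ _ => by positivity)
      _ = (2 / c₁) ^ 2 * ∑ i, a i ^ 2 := by rw [Finset.mul_sum]
      _ ≤ (2 / c₁) ^ 2 * δ ^ 2 := by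
          exact mul_le_mul_of_nonneg_left haE (by positivity)
      _ = (2 * δ / c₁) ^ 2 := by field_simp
  have hfinal : rnorm w ≤ 2 * δ / c₁ := by
    rw [rnorm]
    calc Real.sqrt (∑ t, w t ^ 2) ≤ Real.sqrt ((2 * δ / c₁) ^ 2) :=
          Real.sqrt_le_sqrt (by rw [hwsum]; exact hsum2)
      _ = 2 * δ / c₁ := Real.sqrt_sq (by positivity)
  have : rnorm (fun t => u t - rdot (U i₁) u * U i₁ t) = rnorm w := rfl
  rw [this]
  calc rnorm w ≤ 2 * δ / c₁ := hfinal
    _ ≤ 4 * δ / c₁ := (div_le_div_iff_of_pos_right hc₁).mpr (by linarith)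
end

section
/- Let G_r be an incidence matrix and x a nonzero vector with sgn(x) = sgn(G_rᵀ G_r x) entrywise. Then the vector v = G_r x is not a scalar multiple of the all-ones vector; moreover there exists a diagonal matrix Λ with positive diagonal entries such that x = Λ G_rᵀ G_r x, and v is an eigenvector of R = G_r Λ G_rᵀ with eigenvalue 1. -/
open Matrix

lemma same_sign_div_pos {a b : ℝ} (h : Real.sign a = Real.sign b) (ha : a ≠ 0) :
    0 < a / b := by
  rcases ha.lt_or_gt with h1 | h1
  · rw [Real.sign_of_neg h1] at h
    have hb : b < 0 := by
      rcases lt_trichotomy b 0 with hb | hb | hb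
      · exact hb
      · rw [hb, Real.sign_zero] at h; norm_num at h
      · rw [Real.sign_of_pos hb] at h; norm_num at h
    exact div_pos_of_neg_of_neg h1 hb
  · rw [Real.sign_of_pos h1] at h
    have hb : 0 < b := by
      rcases lt_trichotomy b 0 with hb | hb | hb
      · rw [Real.sign_of_neg hb] at h; norm_num at h
      · rw [hb, Real.sign_zero] at h; norm_num at h
      · exact hb
    exact div_pos h1 hb

theorem stmt17 {q p : ℕ} (Gr : Matrix (Fin q) (Fin p) ℝ) (hGr : IsIncidence Gr)
    (x : Fin p → ℝ) (hx : x ≠ 0)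
    (hsgn : ∀ i, Real.sign (x i) = Real.sign ((Grᵀ.mulVec (Gr.mulVec x)) i)) :
    (¬ ∃ c : ℝ, Gr.mulVec x = fun _ => c) ∧
    ∃ w : Fin p → ℝ, (∀ i, 0 < w i) ∧
      (x = fun i => w i * (Grᵀ.mulVec (Gr.mulVec x)) i) ∧
      (Gr * diagonal w * Grᵀ).mulVec (Gr.mulVec x) = Gr.mulVec x := by
  set y : Fin p → ℝ := Grᵀ.mulVec (Gr.mulVec x) with hy
  -- column sums of Gr vanish
  have hcol : ∀ j : Fin p, ∑ i, Gr i j = 0 := by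
    intro j
    obtain ⟨k, ℓ, hkl, hG⟩ := hGr j
    have : ∑ i, Gr i j = ∑ i, ((if i = k then (1:ℝ) else 0) - (if i = ℓ then 1 else 0)) := by
      exact Finset.sum_congr rfl (fun i _ => hG i)
    rw [this, Finset.sum_sub_distrib]
    simp
  -- if x i ≠ 0 then y i same sign
  have hzero : ∀ i, x i = 0 → y i = 0 := by
    intro i hi
    have := hsgn i
    rw [hi, Real.sign_zero] at this
    exact Real.sign_eq_zero_iff.mp this.symm
  constructor
  · rintro ⟨c, hc⟩
    have hy0 : y = 0 := by
      funext j
      simp only [hy, mulVec, dotProduct, transpose_apply, hc]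
      rw [show ∑ i, Gr i j * c = (∑ i, Gr i j) * c by rw [Finset.sum_mul]]
      rw [hcol j, zero_mul]
      rfl
    apply hx
    funext i
    have := hsgn i
    rw [hy0] at this
    simp only [Pi.zero_apply, Real.sign_zero] at this
    exact Real.sign_eq_zero_iff.mp this
  · refine ⟨fun i => if x i = 0 then 1 else x i / y i, ?_, ?_, ?_⟩
    · intro i
      by_cases hi : x i = 0
      · simp [hi]
      · simpa [hi] using same_sign_div_pos (hsgn i) hi
    · funext i
      by_cases hi : x i = 0
      · simp [hi, hzero i hi]
      · have hyi : y i ≠ 0 := by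
          intro h
          have := hsgn i
          rw [h, Real.sign_zero] at this
          exact hi (Real.sign_eq_zero_iff.mp this)
        simp only [hi, if_neg, ↓reduceIte]
        field_simp
    · have key : x = fun i => (if x i = 0 then (1:ℝ) else x i / y i) * y i := by
        funext i
        by_cases hi : x i = 0
        · simp [hi, hzero i hi]
        · have hyi : y i ≠ 0 := by
            intro h
            have := hsgn i
            rw [h, Real.sign_zero] at this
            exact hi (Real.sign_eq_zero_iff.mp this)
          simp only [hi, if_neg, ↓reduceIte]
          field_simp
      rw [← mulVec_mulVec, ← mulVec_mulVec]
      have : (diagonal fun i => if x i = 0 then (1:ℝ) else x i / y i).mulVec y = x := by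
        funext i
        rw [mulVec_diagonal]
        exact (congrFun key i).symm
      rw [this]
end
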